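/- Let μ be a finite positive measure on the open unit disc and let α > 0. Define the Luecking sets R_{n,j} = {z : 1 − 2^{−n} ≤ |z| < 1 − 2^{−n−1}, 2jπ/2^n ≤ arg z < 2(j+1)π/2^n} and the dyadic Carleson windows W_{n,j} = {z : 1 − 2^{−n} ≤ |z| < 1, 2jπ/2^n ≤ arg z < 2(j+1)π/2^n} for n ≥ 1 and 0 ≤ j ≤ 2^n − 1. Then ∑_{n≥1} ∑_{j=0}^{2^n−1} 2^{nα} μ(R_{n,j})^α < ∞ if and only if ∑_{n≥1} ∑_{j=0}^{2^n−1} 2^{nα} μ(W_{n,j})^α < ∞. -/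

import Mathlib

open MeasureTheory Real
open scoped ENNReal NNReal

/-- argument in [0, 2π) -/
noncomputable def arg2pi (z : ℂ) : ℝ :=
  if Complex.arg z < 0 then Complex.arg z + 2 * π else Complex.arg z

/-- Luecking sets -/
def LueckingSet (n j : ℕ) : Set ℂ :=
  {z : ℂ | 1 - 2 ^ (-(n : ℝ)) ≤ ‖z‖ ∧ ‖z‖ < 1 - 2 ^ (-(n : ℝ) - 1) ∧
    2 * (j : ℝ) * π / 2 ^ (n : ℕ) ≤ arg2pi z ∧ arg2pi z < 2 * ((j : ℝ) + 1) * π / 2 ^ (n : ℕ)}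

/-- dyadic Carleson windows -/
def DyadicWindow (n j : ℕ) : Set ℂ :=
  {z : ℂ | 1 - 2 ^ (-(n : ℝ)) ≤ ‖z‖ ∧ ‖z‖ < 1 ∧
    2 * (j : ℝ) * π / 2 ^ (n : ℕ) ≤ arg2pi z ∧ arg2pi z < 2 * ((j : ℝ) + 1) * π / 2 ^ (n : ℕ)}

lemma aux_tsum_rpow {α : ℝ} (hα : 0 < α) {r : ℝ≥0∞} (hr0 : r ≠ 0) (hr1 : r < 1)
    (f : ℕ → ℝ≥0∞) :
    (∑' t, f t) ^ α ≤ (1 - r)⁻¹ ^ α * ∑' t, ((r ^ t)⁻¹ * f t) ^ α := by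
  set B := ∑' t, ((r ^ t)⁻¹ * f t) ^ α with hB
  have hrtop : r ≠ ⊤ := (hr1.trans ENNReal.one_lt_top).ne
  have key : ∀ t : ℕ, f t ≤ r ^ t * B ^ α⁻¹ := by
    intro t
    have h1 : ((r ^ t)⁻¹ * f t) ^ α ≤ B := ENNReal.le_tsum t
    have h2 : (r ^ t)⁻¹ * f t ≤ B ^ α⁻¹ := by
      calc (r ^ t)⁻¹ * f t = (((r ^ t)⁻¹ * f t) ^ α) ^ α⁻¹ :=
            (ENNReal.rpow_rpow_inv hα.ne' _).symm
        _ ≤ B ^ α⁻¹ := ENNReal.rpow_le_rpow h1 (by positivity)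
    calc f t = r ^ t * ((r ^ t)⁻¹ * f t) := by
          rw [← mul_assoc, ENNReal.mul_inv_cancel (pow_ne_zero t hr0) (ENNReal.pow_ne_top hrtop),
            one_mul]
      _ ≤ r ^ t * B ^ α⁻¹ := mul_le_mul_right h2 _
  have hsum : ∑' t, f t ≤ (1 - r)⁻¹ * B ^ α⁻¹ := by
    calc ∑' t, f t ≤ ∑' t : ℕ, r ^ t * B ^ α⁻¹ := ENNReal.tsum_le_tsum key
      _ = (∑' t : ℕ, r ^ t) * B ^ α⁻¹ := ENNReal.tsum_mul_right
      _ = (1 - r)⁻¹ * B ^ α⁻¹ := by rw [ENNReal.tsum_geometric]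
  calc (∑' t, f t) ^ α ≤ ((1 - r)⁻¹ * B ^ α⁻¹) ^ α := ENNReal.rpow_le_rpow hsum hα.le
    _ = (1 - r)⁻¹ ^ α * B := by
        rw [ENNReal.mul_rpow_of_nonneg _ _ hα.le, ENNReal.rpow_inv_rpow hα.ne']

lemma aux_sum_rpow {α : ℝ} (hα : 0 < α) (s : Finset ℕ) (g : ℕ → ℝ≥0∞) :
    (∑ k ∈ s, g k) ^ α ≤ (s.card : ℝ≥0∞) ^ (max (α - 1) 0) * ∑ k ∈ s, g k ^ α := by
  rcases le_or_gt α 1 with hle | hgt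
  · have hmax : max (α - 1) 0 = 0 := max_eq_right (by linarith)
    rw [hmax, ENNReal.rpow_zero, one_mul]
    induction s using Finset.induction with
    | empty => simp [ENNReal.zero_rpow_of_pos hα]
    | insert a s hnot ih =>
      rw [Finset.sum_insert hnot, Finset.sum_insert hnot]
      calc _ ≤ _ := ENNReal.rpow_add_le_add_rpow _ _ hα.le hle
        _ ≤ _ := add_le_add_right ih _
  · have hmax : max (α - 1) 0 = α - 1 := max_eq_left (by linarith)
    rw [hmax]
    rcases s.eq_empty_or_nonempty with rfl | hs
    · simp [ENNReal.zero_rpow_of_pos hα]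
    have hc0 : (s.card : ℝ≥0∞) ≠ 0 := by
      simpa using hs.card_pos.ne'
    have hctop : (s.card : ℝ≥0∞) ≠ ⊤ := ENNReal.natCast_ne_top _
    have hw : ∑ _i ∈ s, (s.card : ℝ≥0∞)⁻¹ = 1 := by
      rw [Finset.sum_const, nsmul_eq_mul, ENNReal.mul_inv_cancel hc0 hctop]
    have H := ENNReal.rpow_arith_mean_le_arith_mean_rpow s (fun _ => (s.card : ℝ≥0∞)⁻¹)
      (fun i => (s.card : ℝ≥0∞) * g i) hw hgt.le
    have hL : ∀ i : ℕ, (s.card : ℝ≥0∞)⁻¹ * ((s.card : ℝ≥0∞) * g i) = g i := by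
      intro i; rw [← mul_assoc, ENNReal.inv_mul_cancel hc0 hctop, one_mul]
    have hR : ∀ i : ℕ, (s.card : ℝ≥0∞)⁻¹ * ((s.card : ℝ≥0∞) * g i) ^ α
        = (s.card : ℝ≥0∞) ^ (α - 1) * g i ^ α := by
      intro i
      rw [ENNReal.mul_rpow_of_nonneg _ _ hα.le, ← mul_assoc]
      congr 1
      rw [show α = (α - 1) + 1 by ring, ENNReal.rpow_add _ _ hc0 hctop, ENNReal.rpow_one,
        ← mul_assoc, mul_comm ((s.card : ℝ≥0∞))⁻¹, mul_assoc,
        ENNReal.inv_mul_cancel hc0 hctop, mul_one]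
      norm_num
    simp only [hL, hR] at H
    calc (∑ k ∈ s, g k) ^ α ≤ ∑ i ∈ s, (s.card : ℝ≥0∞) ^ (α - 1) * g i ^ α := H
      _ = (s.card : ℝ≥0∞) ^ (α - 1) * ∑ k ∈ s, g k ^ α := by rw [Finset.mul_sum]

lemma aux_block_sum (M d : ℕ) (g : ℕ → ℝ≥0∞) :
    ∑ j ∈ Finset.range M, ∑ k ∈ Finset.Ico (j * d) ((j + 1) * d), g k
      = ∑ k ∈ Finset.range (M * d), g k := by
  induction M with
  | zero => simp
  | succ M ih =>
    rw [Finset.sum_range_succ, ih, Finset.range_eq_Ico, Finset.range_eq_Ico]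
    exact Finset.sum_Ico_consecutive g (Nat.zero_le (M * d))
        (Nat.mul_le_mul_right d (Nat.le_succ M))

lemma rpow_neg_nat (m : ℕ) : (2:ℝ) ^ (-(m:ℝ)) = ((2:ℝ) ^ m)⁻¹ := by
  rw [Real.rpow_neg (by norm_num), Real.rpow_natCast]

lemma aux_cover (n j : ℕ) :
    DyadicWindow n j ⊆
      ⋃ t : ℕ, ⋃ k ∈ Finset.Ico (j * 2 ^ t) ((j + 1) * 2 ^ t), LueckingSet (n + t) k := by
  rintro z ⟨h1, h2, h3, h4⟩
  have hπ : (0:ℝ) < π := Real.pi_pos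
  set s : ℝ := 1 - ‖z‖ with hs
  have hs0 : 0 < s := by simp only [hs]; linarith
  have hsle : s ≤ ((2:ℝ) ^ n)⁻¹ := by
    have := rpow_neg_nat n
    simp only [hs]; rw [← this]; linarith
  have hinv : ((2:ℕ):ℝ) ^ (n:ℤ) ≤ s⁻¹ := by
    rw [show (((2:ℕ):ℝ) ^ (n:ℤ)) = ((2:ℝ) ^ n) by push_cast [zpow_natCast]; ring]
    exact (le_inv_comm₀ (by positivity) hs0).mpr hsle
  have hnL : (n : ℤ) ≤ Int.log 2 s⁻¹ :=
    (Int.zpow_le_iff_le_log (by norm_num) (by positivity)).mp hinv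
  set m := (Int.log 2 s⁻¹).toNat with hm
  have hmn : n ≤ m := by
    have := Int.toNat_le_toNat hnL
    simpa only [Int.toNat_natCast] using this
  have hmL : (m : ℤ) = Int.log 2 s⁻¹ := Int.toNat_of_nonneg (le_trans (by positivity) hnL)
  have hlow : (2:ℝ) ^ m ≤ s⁻¹ := by
    have h := Int.zpow_log_le_self (R := ℝ) (b := 2) (by norm_num) (r := s⁻¹) (by positivity)
    rw [← hmL] at h
    simpa [zpow_natCast] using h
  have hhigh : s⁻¹ < 2 * (2:ℝ) ^ m := by
    have h := Int.lt_zpow_succ_log_self (R := ℝ) (b := 2) (by norm_num) s⁻¹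
    rw [← hmL] at h
    have : ((2:ℕ):ℝ) ^ ((m:ℤ) + 1) = 2 * (2:ℝ) ^ m := by
      rw [zpow_add₀ (by norm_num : ((2:ℕ):ℝ) ≠ 0), zpow_one, zpow_natCast]
      push_cast; ring
    rw [this] at h; exact h
  have hP : (0:ℝ) < 2 ^ m := by positivity
  -- radial bounds at level m
  have habs1 : 1 - 2 ^ (-(m:ℝ)) ≤ ‖z‖ := by
    rw [rpow_neg_nat]
    have : s ≤ ((2:ℝ) ^ m)⁻¹ := (le_inv_comm₀ hs0 hP).mpr hlow
    simp only [hs] at this; linarith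
  have habs2 : ‖z‖ < 1 - 2 ^ (-(m:ℝ) - 1) := by
    have he : (2:ℝ) ^ (-(m:ℝ) - 1) = (2 * 2 ^ m)⁻¹ := by
      rw [show -(m:ℝ) - 1 = -((m:ℝ) + 1) by ring, Real.rpow_neg (by norm_num)]
      congr 1
      rw [Real.rpow_add (by norm_num), Real.rpow_natCast, Real.rpow_one]; ring
    rw [he]
    have : (2 * (2:ℝ) ^ m)⁻¹ < s := (inv_lt_comm₀ (by positivity) hs0).mpr hhigh
    simp only [hs] at this; linarith
  set θ := arg2pi z with hθ
  have hθ0 : 0 ≤ θ := le_trans (by positivity) h3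
  set x : ℝ := θ * 2 ^ m / (2 * π) with hx
  have hx0 : 0 ≤ x := by positivity
  set K := ⌊x⌋.toNat with hK
  have hKfloor : (K : ℤ) = ⌊x⌋ := Int.toNat_of_nonneg (Int.floor_nonneg.mpr hx0)
  have hKx : (K : ℝ) ≤ x := by
    rw [show ((K:ℝ)) = ((K:ℤ):ℝ) by push_cast; ring, hKfloor]; exact Int.floor_le x
  have hxK : x < K + 1 := by
    have h := Int.lt_floor_add_one x
    rw [← hKfloor] at h; push_cast at h ⊢; linarith
  set t := m - n with ht
  have hmnt : m = n + t := by omega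
  have hpow : (2:ℝ) ^ m = 2 ^ n * 2 ^ t := by rw [hmnt, pow_add]
  have hxlb : ((j * 2 ^ t : ℕ) : ℝ) ≤ x := by
    rw [hx, le_div_iff₀ (by positivity)]
    have h := mul_le_mul_of_nonneg_right h3 (le_of_lt hP)
    calc ((j * 2 ^ t : ℕ) : ℝ) * (2 * π) = (2 * j * π / 2 ^ n) * 2 ^ m := by
          push_cast; rw [hpow]; field_simp
      _ ≤ θ * 2 ^ m := h
  have hxub : x < (((j + 1) * 2 ^ t : ℕ) : ℝ) := by
    rw [hx, div_lt_iff₀ (by positivity)]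
    have h := mul_lt_mul_of_pos_right h4 hP
    calc θ * 2 ^ m < (2 * ((j:ℝ) + 1) * π / 2 ^ n) * 2 ^ m := h
      _ = (((j + 1) * 2 ^ t : ℕ) : ℝ) * (2 * π) := by
          push_cast; rw [hpow]; field_simp
  have hKlb : j * 2 ^ t ≤ K := by
    have h : ((j * 2 ^ t : ℕ) : ℤ) ≤ ⌊x⌋ := Int.le_floor.mpr (by exact_mod_cast hxlb)
    rw [← hKfloor] at h; exact_mod_cast h
  have hKub : K < (j + 1) * 2 ^ t := by
    have h : (K : ℝ) < (((j + 1) * 2 ^ t : ℕ) : ℝ) := lt_of_le_of_lt hKx hxub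
    exact_mod_cast h
  have harg1 : 2 * (K:ℝ) * π / 2 ^ (n + t) ≤ θ := by
    rw [div_le_iff₀ (by positivity)]
    have h := (le_div_iff₀ (by positivity : (0:ℝ) < 2 * π)).mp hKx
    calc 2 * (K:ℝ) * π = (K:ℝ) * (2 * π) := by ring
      _ ≤ θ * 2 ^ m := h
      _ = θ * 2 ^ (n + t) := by rw [hmnt]
  have harg2 : θ < 2 * ((K:ℝ) + 1) * π / 2 ^ (n + t) := by
    rw [lt_div_iff₀ (by positivity)]
    have h := (div_lt_iff₀ (by positivity : (0:ℝ) < 2 * π)).mp hxK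
    calc θ * 2 ^ (n + t) = θ * 2 ^ m := by rw [hmnt]
      _ < ((K:ℝ) + 1) * (2 * π) := h
      _ = 2 * ((K:ℝ) + 1) * π := by ring
  refine Set.mem_iUnion.mpr ⟨t, Set.mem_iUnion₂.mpr ⟨K, Finset.mem_Ico.mpr ⟨hKlb, hKub⟩, ?_⟩⟩
  refine ⟨?_, ?_, ?_, ?_⟩
  · rw [← hmnt]; exact habs1
  · rw [← hmnt]; exact habs2
  · exact harg1
  · exact harg2

lemma aux_incl (n j : ℕ) : LueckingSet n j ⊆ DyadicWindow n j := by
  rintro z ⟨h1, h2, h3, h4⟩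
  refine ⟨h1, ?_, h3, h4⟩
  have hp : (0:ℝ) < 2 ^ (-(n : ℝ) - 1) := by positivity
  linarith

theorem luecking_vs_carleson (μ : Measure ℂ) [IsFiniteMeasure μ]
    (hμ : μ {z : ℂ | 1 ≤ ‖z‖} = 0) (α : ℝ) (hα : 0 < α) :
    (∑' n : ℕ, ∑ j ∈ Finset.range (2 ^ (n + 1)),
        (2 : ENNReal) ^ (((n : ℝ) + 1) * α) * (μ (LueckingSet (n + 1) j)) ^ α) ≠ ⊤ ↔
    (∑' n : ℕ, ∑ j ∈ Finset.range (2 ^ (n + 1)),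
        (2 : ENNReal) ^ (((n : ℝ) + 1) * α) * (μ (DyadicWindow (n + 1) j)) ^ α) ≠ ⊤ := by
  have h2 : (2:ℝ≥0∞) ≠ 0 := by norm_num
  have h2' : (2:ℝ≥0∞) ≠ ⊤ := by norm_num
  set SR := ∑' n : ℕ, ∑ j ∈ Finset.range (2 ^ (n + 1)),
      (2 : ENNReal) ^ (((n : ℝ) + 1) * α) * (μ (LueckingSet (n + 1) j)) ^ α with hSR
  set SW := ∑' n : ℕ, ∑ j ∈ Finset.range (2 ^ (n + 1)),
      (2 : ENNReal) ^ (((n : ℝ) + 1) * α) * (μ (DyadicWindow (n + 1) j)) ^ α with hSW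
  -- easy direction
  have easy : SR ≤ SW := by
    refine ENNReal.tsum_le_tsum fun n => Finset.sum_le_sum fun j _ => ?_
    exact mul_le_mul_right (ENNReal.rpow_le_rpow (measure_mono (aux_incl _ _)) hα.le) _
  -- constants
  set γ := max (α - 1) 0 with hγ
  set β := min α 1 with hβdef
  have hβ : 0 < β := lt_min hα one_pos
  have hγβ : γ = α - β := by
    rcases le_total α 1 with h | h
    · rw [hγ, hβdef, max_eq_right (by linarith), min_eq_left h]; ring
    · rw [hγ, hβdef, max_eq_left (by linarith), min_eq_right h]
  set δ := β / 2 with hδ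
  have hδpos : 0 < δ := by positivity
  have hexp : δ + γ - α = -(β / 2) := by rw [hγβ, hδ]; ring
  set r : ℝ≥0∞ := ((2:ℝ≥0∞) ^ (δ / α))⁻¹ with hr
  have hpow_ne_top : (2:ℝ≥0∞) ^ (δ / α) ≠ ⊤ := by
    exact ENNReal.rpow_ne_top_of_nonneg (by positivity) h2'
  have hr0 : r ≠ 0 := ENNReal.inv_ne_zero.mpr hpow_ne_top
  have hr1 : r < 1 := by
    rw [hr, ENNReal.inv_lt_one]
    calc (1:ℝ≥0∞) = 2 ^ (0:ℝ) := by rw [ENNReal.rpow_zero]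
      _ < 2 ^ (δ / α) := by
        refine ENNReal.rpow_lt_rpow_of_exponent_lt (by norm_num) (by norm_num) (by positivity)
  set K1 := ((1 - r)⁻¹ : ℝ≥0∞) ^ α with hK1
  have hK1top : K1 ≠ ⊤ := by
    refine ENNReal.rpow_ne_top_of_nonneg hα.le (ENNReal.inv_ne_top.mpr ?_)
    exact (tsub_pos_iff_lt.mpr hr1).ne'
  set ρ : ℝ≥0∞ := (2:ℝ≥0∞) ^ (δ + γ - α) with hρdef
  have hρ1 : ρ < 1 := by
    rw [hρdef, hexp]
    calc (2:ℝ≥0∞) ^ (-(β/2)) < 2 ^ (0:ℝ) := by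
          refine ENNReal.rpow_lt_rpow_of_exponent_lt (by norm_num) (by norm_num) (by linarith)
      _ = 1 := by rw [ENNReal.rpow_zero]
  have hρtop : ((1 - ρ)⁻¹ : ℝ≥0∞) ≠ ⊤ :=
    ENNReal.inv_ne_top.mpr (tsub_pos_iff_lt.mpr hρ1).ne'
  -- rpow algebra helpers
  have hrt : ∀ t : ℕ, ((r ^ t)⁻¹ : ℝ≥0∞) ^ α = 2 ^ ((t:ℝ) * δ) := by
    intro t
    rw [ENNReal.inv_pow, hr, inv_inv, ← ENNReal.rpow_natCast ((2:ℝ≥0∞) ^ (δ / α)) t,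
      ← ENNReal.rpow_mul, ← ENNReal.rpow_mul]
    congr 1
    field_simp
  have hρt : ∀ t : ℕ, ρ ^ t = (2:ℝ≥0∞) ^ ((t:ℝ) * (δ + γ - α)) := by
    intro t
    rw [hρdef, ← ENNReal.rpow_natCast ((2:ℝ≥0∞) ^ (δ + γ - α)) t, ← ENNReal.rpow_mul]
    congr 1; ring
  have hcast : ∀ t : ℕ, ((2 ^ t : ℕ) : ℝ≥0∞) ^ γ = (2:ℝ≥0∞) ^ ((t:ℝ) * γ) := by
    intro t
    have : ((2 ^ t : ℕ) : ℝ≥0∞) = (2:ℝ≥0∞) ^ (t:ℝ) := by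
      rw [ENNReal.rpow_natCast]; push_cast; ring
    rw [this, ← ENNReal.rpow_mul]
  -- the per-term bound
  have hterm : ∀ n j : ℕ,
      (2 : ℝ≥0∞) ^ (((n : ℝ) + 1) * α) * (μ (DyadicWindow (n + 1) j)) ^ α ≤
        K1 * ∑' t : ℕ, ρ ^ t * ((2:ℝ≥0∞) ^ (((((n + t : ℕ)) : ℝ) + 1) * α) *
          ∑ k ∈ Finset.Ico (j * 2 ^ t) ((j + 1) * 2 ^ t),
            (μ (LueckingSet (n + 1 + t) k)) ^ α) := by
    intro n j
    set c : ℕ → ℝ≥0∞ := fun t => ∑ k ∈ Finset.Ico (j * 2 ^ t) ((j + 1) * 2 ^ t),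
      μ (LueckingSet (n + 1 + t) k) with hc
    have hA : μ (DyadicWindow (n + 1) j) ≤ ∑' t, c t := by
      calc μ (DyadicWindow (n + 1) j)
          ≤ μ (⋃ t : ℕ, ⋃ k ∈ Finset.Ico (j * 2 ^ t) ((j + 1) * 2 ^ t),
              LueckingSet (n + 1 + t) k) := measure_mono (aux_cover (n + 1) j)
        _ ≤ ∑' t : ℕ, μ (⋃ k ∈ Finset.Ico (j * 2 ^ t) ((j + 1) * 2 ^ t),
              LueckingSet (n + 1 + t) k) := measure_iUnion_le _
        _ ≤ ∑' t, c t := ENNReal.tsum_le_tsum fun t => measure_biUnion_finset_le _ _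
    have hB : (μ (DyadicWindow (n + 1) j)) ^ α ≤ K1 * ∑' t, ((r ^ t)⁻¹ * c t) ^ α :=
      le_trans (ENNReal.rpow_le_rpow hA hα.le) (aux_tsum_rpow hα hr0 hr1 c)
    have hD : ∀ t : ℕ, (c t) ^ α ≤ (2:ℝ≥0∞) ^ ((t:ℝ) * γ) *
        ∑ k ∈ Finset.Ico (j * 2 ^ t) ((j + 1) * 2 ^ t),
          (μ (LueckingSet (n + 1 + t) k)) ^ α := by
      intro t
      have hcard : (Finset.Ico (j * 2 ^ t) ((j + 1) * 2 ^ t)).card = 2 ^ t := by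
        rw [Nat.card_Ico, Nat.succ_mul, Nat.add_sub_cancel_left]
      have h := aux_sum_rpow hα (Finset.Ico (j * 2 ^ t) ((j + 1) * 2 ^ t))
        (fun k => μ (LueckingSet (n + 1 + t) k))
      rw [hcard, ← hγ, hcast t] at h
      exact h
    have hE : ∀ t : ℕ, (2:ℝ≥0∞) ^ (((n : ℝ) + 1) * α) * ((r ^ t)⁻¹ * c t) ^ α ≤
        ρ ^ t * ((2:ℝ≥0∞) ^ (((((n + t : ℕ)) : ℝ) + 1) * α) *
          ∑ k ∈ Finset.Ico (j * 2 ^ t) ((j + 1) * 2 ^ t),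
            (μ (LueckingSet (n + 1 + t) k)) ^ α) := by
      intro t
      have hco : (2:ℝ≥0∞) ^ (((n : ℝ) + 1) * α) *
          ((2:ℝ≥0∞) ^ ((t:ℝ) * δ) * (2:ℝ≥0∞) ^ ((t:ℝ) * γ)) =
          ρ ^ t * (2:ℝ≥0∞) ^ (((((n + t : ℕ)) : ℝ) + 1) * α) := by
        rw [hρt t, ← ENNReal.rpow_add _ _ h2 h2', ← ENNReal.rpow_add _ _ h2 h2',
          ← ENNReal.rpow_add _ _ h2 h2']
        congr 1
        push_cast
        ring
      calc (2:ℝ≥0∞) ^ (((n : ℝ) + 1) * α) * ((r ^ t)⁻¹ * c t) ^ α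
          = (2:ℝ≥0∞) ^ (((n : ℝ) + 1) * α) *
            ((2:ℝ≥0∞) ^ ((t:ℝ) * δ) * (c t) ^ α) := by
            rw [ENNReal.mul_rpow_of_nonneg _ _ hα.le, hrt t]
        _ ≤ (2:ℝ≥0∞) ^ (((n : ℝ) + 1) * α) * ((2:ℝ≥0∞) ^ ((t:ℝ) * δ) *
              ((2:ℝ≥0∞) ^ ((t:ℝ) * γ) *
               ∑ k ∈ Finset.Ico (j * 2 ^ t) ((j + 1) * 2 ^ t),
                 (μ (LueckingSet (n + 1 + t) k)) ^ α)) := by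
            gcongr
            exact hD t
        _ = ((2:ℝ≥0∞) ^ (((n : ℝ) + 1) * α) *
              ((2:ℝ≥0∞) ^ ((t:ℝ) * δ) * (2:ℝ≥0∞) ^ ((t:ℝ) * γ))) *
             ∑ k ∈ Finset.Ico (j * 2 ^ t) ((j + 1) * 2 ^ t),
               (μ (LueckingSet (n + 1 + t) k)) ^ α := by ring
        _ = (ρ ^ t * (2:ℝ≥0∞) ^ (((((n + t : ℕ)) : ℝ) + 1) * α)) *
             ∑ k ∈ Finset.Ico (j * 2 ^ t) ((j + 1) * 2 ^ t),
               (μ (LueckingSet (n + 1 + t) k)) ^ α := by rw [hco]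
        _ = _ := by ring
    calc (2 : ℝ≥0∞) ^ (((n : ℝ) + 1) * α) * (μ (DyadicWindow (n + 1) j)) ^ α
        ≤ (2 : ℝ≥0∞) ^ (((n : ℝ) + 1) * α) *
            (K1 * ∑' t, ((r ^ t)⁻¹ * c t) ^ α) := mul_le_mul_right hB _
      _ = K1 * ∑' t, (2 : ℝ≥0∞) ^ (((n : ℝ) + 1) * α) * ((r ^ t)⁻¹ * c t) ^ α := by
          rw [ENNReal.tsum_mul_left]
          ring
      _ ≤ K1 * ∑' t : ℕ, ρ ^ t * ((2:ℝ≥0∞) ^ (((((n + t : ℕ)) : ℝ) + 1) * α) *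
            ∑ k ∈ Finset.Ico (j * 2 ^ t) ((j + 1) * 2 ^ t),
              (μ (LueckingSet (n + 1 + t) k)) ^ α) :=
          mul_le_mul_right (ENNReal.tsum_le_tsum hE) _
  -- global assembly
  set A : ℕ → ℝ≥0∞ := fun m => ∑ k ∈ Finset.range (2 ^ (m + 1)),
    (μ (LueckingSet (m + 1) k)) ^ α with hAdef
  set G : ℕ → ℝ≥0∞ := fun m => (2:ℝ≥0∞) ^ (((m : ℝ) + 1) * α) * A m with hGdef
  have hSRG : SR = ∑' m, G m := by
    rw [hSR]
    exact tsum_congr fun m => (Finset.mul_sum _ _ _).symm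
  have hard : SW ≤ K1 * ((1 - ρ)⁻¹ * SR) := by
    calc SW ≤ ∑' n : ℕ, ∑ j ∈ Finset.range (2 ^ (n + 1)),
          K1 * ∑' t : ℕ, ρ ^ t * ((2:ℝ≥0∞) ^ (((((n + t : ℕ)) : ℝ) + 1) * α) *
            ∑ k ∈ Finset.Ico (j * 2 ^ t) ((j + 1) * 2 ^ t),
              (μ (LueckingSet (n + 1 + t) k)) ^ α) :=
        ENNReal.tsum_le_tsum fun n => Finset.sum_le_sum fun j _ => hterm n j
      _ = ∑' n : ℕ, K1 * ∑' t : ℕ, ρ ^ t * G (n + t) := by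
          refine tsum_congr fun n => ?_
          rw [← Finset.mul_sum]
          congr 1
          rw [← Summable.tsum_finsetSum (fun j _ => ENNReal.summable)]
          refine tsum_congr fun t => ?_
          rw [← Finset.mul_sum, ← Finset.mul_sum, aux_block_sum]
          have h1 : 2 ^ (n + 1) * 2 ^ t = 2 ^ ((n + t) + 1) := by
            rw [← pow_add]
            congr 1
            omega
          have h2 : n + 1 + t = (n + t) + 1 := by omega
          rw [h1, h2]
      _ = K1 * ∑' n : ℕ, ∑' t : ℕ, ρ ^ t * G (n + t) := by rw [ENNReal.tsum_mul_left]
      _ = K1 * ∑' t : ℕ, ∑' n : ℕ, ρ ^ t * G (n + t) := by rw [ENNReal.tsum_comm]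
      _ = K1 * ∑' t : ℕ, ρ ^ t * ∑' n : ℕ, G (n + t) := by
          congr 1
          exact tsum_congr fun t => ENNReal.tsum_mul_left
      _ ≤ K1 * ∑' t : ℕ, ρ ^ t * ∑' m : ℕ, G m := by
          refine mul_le_mul_right (ENNReal.tsum_le_tsum fun t => mul_le_mul_right ?_ _) _
          exact ENNReal.tsum_comp_le_tsum_of_injective (add_left_injective t) G
      _ = K1 * ((1 - ρ)⁻¹ * SR) := by
          rw [ENNReal.tsum_mul_right, ENNReal.tsum_geometric, hSRG]
  constructor
  · intro hR
    exact ne_top_of_le_ne_top (ENNReal.mul_ne_top hK1top (ENNReal.mul_ne_top hρtop hR)) hard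
  · intro hW
    exact ne_top_of_le_ne_top hW easy
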